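/- For every s ≥ 2, λ(O_s) = 1/16. -/

import Mathlib

open Finset

/-- An `r`-graph: a finite vertex set together with a finite set of edges,
each edge being a subset of the vertex set. (Uniformity is a separate predicate.) -/
structure HyperGraph where
  verts : Finset ℕ
  edges : Finset (Finset ℕ)
  edge_sub : ∀ e ∈ edges, e ⊆ verts

namespace HyperGraph

/-- `G` is `r`-uniform: every edge has `r` vertices. -/
def IsUniform (G : HyperGraph) (r : ℕ) : Prop := ∀ e ∈ G.edges, e.card = r

def IsSubgraph (H G : HyperGraph) : Prop := H.verts ⊆ G.verts ∧ H.edges ⊆ G.edges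

def IsProperSubgraph (H G : HyperGraph) : Prop := H.IsSubgraph G ∧ H ≠ G

/-- `G` contains a subgraph isomorphic to `F` (an injective copy of `F`). -/
def HasCopy (G F : HyperGraph) : Prop :=
  ∃ f : ℕ → ℕ, Set.InjOn f ↑F.verts ∧ (∀ v ∈ F.verts, f v ∈ G.verts) ∧
    ∀ e ∈ F.edges, e.image f ∈ G.edges

/-- `G` is `F`-free: it contains no subgraph isomorphic to `F`. -/
def Free (G F : HyperGraph) : Prop := ¬ G.HasCopy F

/-- A feasible weight vector: nonnegative weights summing to 1 over the vertex set. -/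
def IsWeighting (G : HyperGraph) (w : ℕ → ℝ) : Prop :=
  (∀ i, 0 ≤ w i) ∧ ∑ i ∈ G.verts, w i = 1

/-- The Lagrangian polynomial `λ(G, w) = Σ_{e ∈ E(G)} Π_{i ∈ e} w i`. -/
def lagrangianAt (G : HyperGraph) (w : ℕ → ℝ) : ℝ := ∑ e ∈ G.edges, ∏ i ∈ e, w i

/-- The Lagrangian `λ(G)`: the maximum of `λ(G, w)` over feasible weight vectors. -/
noncomputable def lagrangian (G : HyperGraph) : ℝ :=
  sSup {x : ℝ | ∃ w : ℕ → ℝ, G.IsWeighting w ∧ x = G.lagrangianAt w}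

/-- `G` is dense: every proper subgraph has strictly smaller Lagrangian. -/
def IsDense (G : HyperGraph) : Prop :=
  ∀ H : HyperGraph, H.IsProperSubgraph G → H.lagrangian < G.lagrangian

/-- The Lagrangian density `π_λ(F) = sup { r! · λ(G) : G an F-free r-graph }`. -/
noncomputable def lagrangianDensity (r : ℕ) (F : HyperGraph) : ℝ :=
  sSup {x : ℝ | ∃ G : HyperGraph, G.IsUniform r ∧ G.Free F ∧
    x = (r.factorial : ℝ) * G.lagrangian}

/-- The subgraph of `G` induced by `A`. -/
def induce (G : HyperGraph) (A : Finset ℕ) : HyperGraph where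
  verts := A
  edges := G.edges.filter (fun e => e ⊆ A)
  edge_sub := fun _ he => (Finset.mem_filter.mp he).2

/-- The link `N(a,b) = { c : {a,b,c} ∈ E(G) }`. -/
def link2 (G : HyperGraph) (a b : ℕ) : Set ℕ := {c | ({a, b, c} : Finset ℕ) ∈ G.edges}

/-- `{a, b}` is a good pair to `A`. -/
def IsGoodPair (G : HyperGraph) (A : Finset ℕ) (a b : ℕ) : Prop :=
  a ≠ b ∧ a ∈ G.verts ∧ b ∈ G.verts ∧ a ∉ A ∧ b ∉ A ∧
    ∀ k ∈ A, G.link2 a k = {b} ∧ G.link2 b k = {a}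

/-- The pairs `{a 1, b 1}, …, {a s, b s}` are good pairs to `A`
partitioning `V(G) ∖ A`. -/
def GoodPartition (G : HyperGraph) (A : Finset ℕ) (s : ℕ) (a b : ℕ → ℕ) : Prop :=
  A ⊆ G.verts ∧
  (∀ v, v ∈ G.verts \ A ↔ ∃ i ∈ Finset.Icc 1 s, v = a i ∨ v = b i) ∧
  (∀ i ∈ Finset.Icc 1 s, ∀ j ∈ Finset.Icc 1 s, i ≠ j →
    ({a i, b i} : Finset ℕ) ∩ {a j, b j} = ∅) ∧
  (∀ i ∈ Finset.Icc 1 s, G.IsGoodPair A (a i) (b i))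

/-- `G` is a good graph to `A`. -/
def IsGoodGraph (G : HyperGraph) (A : Finset ℕ) : Prop := ∃ s a b, G.GoodPartition A s a b

end HyperGraph

open HyperGraph

/-- The complete `r`-graph `K_t^r` on `t` vertices. -/
def completeHyperGraph (t r : ℕ) : HyperGraph where
  verts := Finset.Icc 1 t
  edges := (Finset.Icc 1 t).powersetCard r
  edge_sub := fun _ he => (Finset.mem_powersetCard.mp he).1

/-- `K_t^{3-}`: the complete 3-graph on `t` vertices with one edge removed. -/
def completeMinus (t : ℕ) : HyperGraph where
  verts := Finset.Icc 1 t
  edges := ((Finset.Icc 1 t).powersetCard 3).filter (fun e => e ≠ ({1,2,3} : Finset ℕ))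
  edge_sub := fun _ he => (Finset.mem_powersetCard.mp (Finset.mem_filter.mp he).1).1

/-- The generalized triangle `F_5 = {123, 124, 345}`. -/
def F5 : HyperGraph where
  verts := {1,2,3,4,5}
  edges := {{1,2,3},{1,2,4},{3,4,5}}
  edge_sub := by decide

/-- The 3-uniform linear cycle of length 3: `C_3^3 = {123, 345, 561}`. -/
def C33 : HyperGraph where
  verts := {1,2,3,4,5,6}
  edges := {{1,2,3},{3,4,5},{5,6,1}}
  edge_sub := by decide

open scoped Classical in
/-- The 3-uniform linear cycle `C_t^3` of length `t`, with vertex set `[2t]` and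
edges `{123, 345, …, (2t-3)(2t-2)(2t-1), (2t-1)(2t)1}`. -/
noncomputable def linearCycle (t : ℕ) : HyperGraph where
  verts := Finset.Icc 1 (2*t)
  edges := ((Finset.Icc 1 (2*t)).powersetCard 3).filter
    (fun e => (∃ k < t - 1, e = ({2*k+1, 2*k+2, 2*k+3} : Finset ℕ)) ∨
      e = ({2*t-1, 2*t, 1} : Finset ℕ))
  edge_sub := fun _ he => (Finset.mem_powersetCard.mp (Finset.mem_filter.mp he).1).1

/-- The 3-graph `S_{2,t}` with vertex set `[t+2]` and edges `{12k : 3 ≤ k ≤ t+2}`. -/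
def S2 (t : ℕ) : HyperGraph where
  verts := Finset.Icc 1 (t+2)
  edges := (Finset.Icc 3 (t+2)).image (fun k => ({1,2,k} : Finset ℕ))
  edge_sub := by
    intro e he
    simp only [Finset.mem_image] at he
    obtain ⟨k, hk, rfl⟩ := he
    simp only [Finset.mem_Icc] at hk
    intro x hx
    simp only [Finset.mem_insert, Finset.mem_singleton] at hx
    simp only [Finset.mem_Icc]
    rcases hx with rfl | rfl | rfl <;> omega

/-- `F` is (up to relabeling) the disjoint union `G ⊔ H`. -/
def IsDisjointUnion (F G H : HyperGraph) : Prop :=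
  ∃ f g : ℕ → ℕ, Set.InjOn f ↑G.verts ∧ Set.InjOn g ↑H.verts ∧
    Disjoint (G.verts.image f) (H.verts.image g) ∧
    F.verts = G.verts.image f ∪ H.verts.image g ∧
    F.edges = G.edges.image (fun e => e.image f) ∪ H.edges.image (fun e => e.image g)

/-- An `r`-graph `H` on `t` vertices is perfect if `π_λ(H) = r! · λ(K_{t-1}^r)`. -/
def IsPerfect (r : ℕ) (H : HyperGraph) : Prop :=
  lagrangianDensity r H =
    (r.factorial : ℝ) * (completeHyperGraph (H.verts.card - 1) r).lagrangian

/-- The Turán number `ex(n, F)` for `r`-graphs on `n` vertices. -/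
noncomputable def exNum (n r : ℕ) (F : HyperGraph) : ℕ :=
  sSup {m : ℕ | ∃ G : HyperGraph, G.IsUniform r ∧ G.verts.card = n ∧ G.Free F ∧
    m = G.edges.card}

/-- The defining property of an edge of `O_s`. -/
def OsPred (s : ℕ) (e : Finset ℕ) : Prop :=
  ∃ i ∈ Finset.Icc 1 s, ∃ j ∈ Finset.Icc 1 s, i ≠ j ∧
    (e = ({2*i-1, 2*i, 2*j-1} : Finset ℕ) ∨ e = ({2*i-1, 2*i, 2*j} : Finset ℕ))

instance (s : ℕ) : DecidablePred (OsPred s) := fun e => by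
  unfold OsPred; infer_instance

/-- The 3-graph `O_s` on vertices `a_i = 2i-1`, `b_i = 2i` (`1 ≤ i ≤ s`) with edges
`a_i b_i a_j` and `a_i b_i b_j` for `i ≠ j`. -/
def Os (s : ℕ) : HyperGraph where
  verts := Finset.Icc 1 (2*s)
  edges := ((Finset.Icc 1 (2*s)).powersetCard 3).filter (OsPred s)
  edge_sub := fun _ he => (Finset.mem_powersetCard.mp (Finset.mem_filter.mp he).1).1

/-- `s = ⌈r^{r-1} / (2 (r-1)!)⌉`. -/
def sVal (r : ℕ) : ℕ := ⌈(r : ℚ)^(r-1) / (2 * ((r-1).factorial : ℚ))⌉₊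

/-- The vertex `a_i`, realized as the natural number `r - 2 + i`. -/
def aVert (r i : ℕ) : ℕ := r - 2 + i

/-- The vertex `m_j`: a fresh vertex distinct from `1, …, r-2, a_1, a_2, a_3`. -/
def mVert (r j : ℕ) : ℕ := r + 1 + j

/-- The edge `e_j = {1, 2, …, r-2, a_1, a_{j+1}}`. -/
def eEdge (r j : ℕ) : Finset ℕ := Finset.Icc 1 (r-2) ∪ {aVert r 1, aVert r (j+1)}

/-- The edge `{a_2, a_3, 1, …, i, m_1, …, m_{r-i-2}}` (for `i = 0` this is
`{a_2, a_3, m_1, …, m_{r-2}}`). -/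
def thirdEdge (r i : ℕ) : Finset ℕ :=
  {aVert r 2, aVert r 3} ∪ Finset.Icc 1 i ∪ (Finset.Icc 1 (r - i - 2)).image (mVert r)

/-- The `r`-graph `F_i^r` with edges `e_1`, `e_2` and the third edge above. -/
def Fgraph (r i : ℕ) : HyperGraph where
  verts := eEdge r 1 ∪ eEdge r 2 ∪ thirdEdge r i
  edges := {eEdge r 1, eEdge r 2, thirdEdge r i}
  edge_sub := by
    intro e he
    simp only [Finset.mem_insert, Finset.mem_singleton] at he
    rcases he with rfl | rfl | rfl
    · exact Finset.subset_union_left.trans Finset.subset_union_left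
    · exact Finset.subset_union_right.trans Finset.subset_union_left
    · exact Finset.subset_union_right



section OsProofAux
open Finset

private lemma sum_biUnion_le_aux {α β : Type*} [DecidableEq α] [DecidableEq β]
    (s : Finset α) (t : α → Finset β) (f : β → ℝ) (hf : ∀ b, 0 ≤ f b) :
    ∑ b ∈ s.biUnion t, f b ≤ ∑ a ∈ s, ∑ b ∈ t a, f b := by
  induction s using Finset.induction with
  | empty => simp
  | insert _ _ ha ih =>
      rw [Finset.biUnion_insert, Finset.sum_insert ha]
      calc ∑ b ∈ _ ∪ _, f b ≤ ∑ b ∈ t _, f b + ∑ b ∈ _, f b := by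
            rw [← Finset.sum_union_inter]
            exact le_add_of_nonneg_right (Finset.sum_nonneg fun b _ => hf b)
        _ ≤ _ := by gcongr

private lemma prod_triple (w : ℕ → ℝ) {a b c : ℕ} (hab : a ≠ b) (hac : a ≠ c) (hbc : b ≠ c) :
    ∏ i ∈ ({a, b, c} : Finset ℕ), w i = w a * w b * w c := by
  rw [show ({a,b,c} : Finset ℕ) = insert a (insert b {c}) from rfl,
    Finset.prod_insert (by simp [hab, hac]), Finset.prod_insert (by simp [hbc]),
    Finset.prod_singleton, mul_assoc]

private lemma sum_pairs_aux (w : ℕ → ℝ) (s : ℕ) :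
    ∑ i ∈ Finset.Icc 1 s, (w (2*i-1) + w (2*i)) = ∑ v ∈ Finset.Icc 1 (2*s), w v := by
  induction s with
  | zero => simp
  | succ n ih =>
      rw [Finset.sum_Icc_succ_top (by omega)]
      have h2 : 2*(n+1) = (2*n+1)+1 := by ring
      rw [h2, Finset.sum_Icc_succ_top (by omega), Finset.sum_Icc_succ_top (by omega), ih]
      have e1 : 2*n+1+1-1 = 2*n+1 := by omega
      rw [e1]; ring

private lemma Os_upper (s : ℕ) (w : ℕ → ℝ) (hw0 : ∀ i, 0 ≤ w i)
    (hw1 : ∑ v ∈ Finset.Icc 1 (2*s), w v = 1) :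
    (Os s).lagrangianAt w ≤ 1/16 := by
  classical
  set t : ℕ → ℝ := fun i => w (2*i-1) + w (2*i) with ht
  set p : ℕ → ℝ := fun i => w (2*i-1) * w (2*i) with hp
  have hfnn : ∀ e : Finset ℕ, 0 ≤ ∏ v ∈ e, w v :=
    fun e => Finset.prod_nonneg fun v _ => hw0 v
  have hts : ∑ j ∈ Finset.Icc 1 s, t j = 1 := by rw [ht]; rw [sum_pairs_aux w s]; exact hw1
  have htnn : ∀ j, 0 ≤ t j := fun j => add_nonneg (hw0 _) (hw0 _)
  set P : Finset (ℕ × ℕ) := (Finset.Icc 1 s ×ˢ Finset.Icc 1 s).filter (fun q => q.1 ≠ q.2)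
    with hP
  set T : ℕ × ℕ → Finset (Finset ℕ) := fun q =>
    {({2*q.1-1, 2*q.1, 2*q.2-1} : Finset ℕ), ({2*q.1-1, 2*q.1, 2*q.2} : Finset ℕ)} with hT
  have hsub : (Os s).edges ⊆ P.biUnion T := by
    intro e he
    have he2 := (Finset.mem_filter.mp he).2
    obtain ⟨i, hi, j, hj, hij, hcase⟩ := he2
    refine Finset.mem_biUnion.mpr ⟨(i,j), ?_, ?_⟩
    · simp only [hP, Finset.mem_filter, Finset.mem_product]
      exact ⟨⟨hi, hj⟩, hij⟩
    · simp only [hT, Finset.mem_insert, Finset.mem_singleton]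
      tauto
  have key : ∀ q ∈ P, ∑ e ∈ T q, ∏ v ∈ e, w v = p q.1 * t q.2 := by
    rintro ⟨i, j⟩ hq
    simp only [hP, Finset.mem_filter, Finset.mem_product, Finset.mem_Icc] at hq
    obtain ⟨⟨⟨hi1, -⟩, ⟨hj1, -⟩⟩, hij⟩ := hq
    have hij' : i ≠ j := hij
    have hne : ({2*i-1, 2*i, 2*j-1} : Finset ℕ) ≠ ({2*i-1, 2*i, 2*j} : Finset ℕ) := by
      intro h
      have : (2*j-1) ∈ ({2*i-1, 2*i, 2*j} : Finset ℕ) := by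
        rw [← h]; simp
      simp only [Finset.mem_insert, Finset.mem_singleton] at this
      omega
    have hTq : T (i, j) = insert ({2*i-1, 2*i, 2*j-1} : Finset ℕ)
        {({2*i-1, 2*i, 2*j} : Finset ℕ)} := rfl
    rw [hTq, Finset.sum_insert (by simpa using hne), Finset.sum_singleton]
    rw [prod_triple w (by omega) (by omega) (by omega),
      prod_triple w (by omega) (by omega) (by omega)]
    simp only [hp, ht]
    ring
  have step1 : (Os s).lagrangianAt w ≤ ∑ q ∈ P, (p q.1 * t q.2) := by
    calc (Os s).lagrangianAt w ≤ ∑ e ∈ P.biUnion T, ∏ v ∈ e, w v :=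
          Finset.sum_le_sum_of_subset_of_nonneg hsub fun e _ _ => hfnn e
      _ ≤ ∑ q ∈ P, ∑ e ∈ T q, ∏ v ∈ e, w v := sum_biUnion_le_aux P T _ hfnn
      _ = ∑ q ∈ P, (p q.1 * t q.2) := Finset.sum_congr rfl key
  have step2 : ∑ q ∈ P, (p q.1 * t q.2)
      = ∑ i ∈ Finset.Icc 1 s, p i * (1 - t i) := by
    rw [hP, Finset.sum_filter, Finset.sum_product]
    refine Finset.sum_congr rfl fun i hi => ?_
    have : ∀ j ∈ Finset.Icc 1 s,
        (if i ≠ j then p i * t j else 0) = p i * t j - (if i = j then p i * t j else 0) := by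
      intro j _
      by_cases h : i = j <;> simp [h]
    rw [Finset.sum_congr rfl this, Finset.sum_sub_distrib, Finset.sum_ite_eq, if_pos hi,
      ← Finset.mul_sum, hts]
    ring
  have step3 : ∑ i ∈ Finset.Icc 1 s, p i * (1 - t i) ≤ ∑ i ∈ Finset.Icc 1 s, t i / 16 := by
    refine Finset.sum_le_sum fun i hi => ?_
    have hti : t i ≤ 1 := by
      rw [← hts]
      exact Finset.single_le_sum (fun j _ => htnn j) hi
    have hx := hw0 (2*i-1)
    have hy := hw0 (2*i)
    simp only [hp, ht] at hti ⊢
    nlinarith [sq_nonneg (w (2*i-1) - w (2*i)),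
      mul_nonneg (sub_nonneg.2 hti) (sq_nonneg (w (2*i-1) - w (2*i))),
      mul_nonneg (add_nonneg hx hy) (sq_nonneg (2*(w (2*i-1) + w (2*i)) - 1))]
  calc (Os s).lagrangianAt w ≤ _ := step1
    _ = _ := step2
    _ ≤ _ := step3
    _ = 1/16 := by rw [← Finset.sum_div, hts]

private noncomputable def witOs : ℕ → ℝ := fun v => if v ≤ 4 then 1/4 else 0

private lemma witOs_nonneg : ∀ i, 0 ≤ witOs i := by
  intro i; unfold witOs; split <;> norm_num

private lemma witOs_sum (s : ℕ) (hs : 2 ≤ s) : ∑ v ∈ Finset.Icc 1 (2*s), witOs v = 1 := by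
  rw [← Finset.sum_subset (Finset.Icc_subset_Icc le_rfl (by omega : 4 ≤ 2*s))
    (fun v hv hnv => ?_)]
  · have h4 : ∀ v ∈ Finset.Icc 1 4, witOs v = 1/4 := by
      intro v hv
      simp [witOs, (Finset.mem_Icc.mp hv).2]
    rw [Finset.sum_congr rfl h4, Finset.sum_const, Nat.card_Icc]
    norm_num
  · simp only [Finset.mem_Icc] at hv hnv
    simp [witOs, show ¬ v ≤ 4 by omega]

private def E4 : Finset (Finset ℕ) := {{1,2,3},{1,2,4},{1,3,4},{2,3,4}}

private lemma E4_card : E4 = Finset.powersetCard 3 (Finset.Icc 1 4) := by decide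

private lemma E4_sub (s : ℕ) (hs : 2 ≤ s) : E4 ⊆ (Os s).edges := by
  intro e he
  have h1s : 1 ∈ Finset.Icc 1 s := by simp only [Finset.mem_Icc]; omega
  have h2s : 2 ∈ Finset.Icc 1 s := by simp only [Finset.mem_Icc]; omega
  refine Finset.mem_filter.mpr ⟨Finset.mem_powersetCard.mpr ⟨?_, ?_⟩, ?_⟩
  · intro v hv
    have hsub4 : e ⊆ Finset.Icc 1 4 := by
      rw [E4] at he
      fin_cases he <;> decide
    have := hsub4 hv
    simp only [Finset.mem_Icc] at this ⊢
    omega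
  · rw [E4] at he
    fin_cases he <;> decide
  · rw [E4] at he
    fin_cases he
    · exact ⟨1, h1s, 2, h2s, by omega, Or.inl (by decide)⟩
    · exact ⟨1, h1s, 2, h2s, by omega, Or.inr (by decide)⟩
    · exact ⟨2, h2s, 1, h1s, by omega, Or.inl (by decide)⟩
    · exact ⟨2, h2s, 1, h1s, by omega, Or.inr (by decide)⟩

private lemma witOs_lag (s : ℕ) (hs : 2 ≤ s) : (Os s).lagrangianAt witOs = 1/16 := by
  classical
  have hzero : ∀ e ∈ (Os s).edges, e ∉ E4 → ∏ v ∈ e, witOs v = 0 := by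
    intro e he hne
    have hmem := Finset.mem_powersetCard.mp (Finset.mem_filter.mp he).1
    by_cases hbig : ∃ v ∈ e, ¬ v ≤ 4
    · obtain ⟨v, hv, hv4⟩ := hbig
      exact Finset.prod_eq_zero hv (by simp [witOs, hv4])
    · push_neg at hbig
      exfalso
      apply hne
      rw [E4_card]
      refine Finset.mem_powersetCard.mpr ⟨fun v hv => ?_, hmem.2⟩
      have h1 := hmem.1 hv
      simp only [Finset.mem_Icc] at h1 ⊢
      exact ⟨h1.1, hbig v hv⟩
  have heq : (Os s).lagrangianAt witOs = ∑ e ∈ E4, ∏ v ∈ e, witOs v :=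
    (Finset.sum_subset (E4_sub s hs) hzero).symm
  rw [heq]
  have hval : ∀ e ∈ E4, ∏ v ∈ e, witOs v = 1/64 := by
    intro e he
    rw [E4] at he
    fin_cases he <;>
      rw [prod_triple witOs (by omega) (by omega) (by omega)] <;>
      norm_num [witOs]
  rw [Finset.sum_congr rfl hval, Finset.sum_const, show E4.card = 4 from by decide]
  norm_num

end OsProofAux

/-- for every `s ≥ 2`, `λ(O_s) = 1/16`. -/
theorem lagrangian_Os (s : ℕ) (hs : 2 ≤ s) : (Os s).lagrangian = 1 / 16 := by
  have hub : ∀ x ∈ {x : ℝ | ∃ w : ℕ → ℝ, (Os s).IsWeighting w ∧ x = (Os s).lagrangianAt w},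
      x ≤ 1/16 := by
    rintro x ⟨w, ⟨h0, h1⟩, rfl⟩
    exact Os_upper s w h0 h1
  have hmem : (1/16 : ℝ) ∈
      {x : ℝ | ∃ w : ℕ → ℝ, (Os s).IsWeighting w ∧ x = (Os s).lagrangianAt w} :=
    ⟨witOs, ⟨witOs_nonneg, witOs_sum s hs⟩, (witOs_lag s hs).symm⟩
  rw [HyperGraph.lagrangian]
  refine le_antisymm (Real.sSup_le hub (by norm_num)) (le_csSup ⟨1/16, hub⟩ hmem)
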